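/- Let f : ℝⁿ → ℝ and λ > 0 and suppose x⁺ minimizes y ↦ f(y) + (1/(2λ))‖y−x‖², that the Moreau envelope e_λ f is differentiable at x with ∇e_λ f(x) = (1/λ)(x − x⁺), and that e_λ f is convex on a convex set C containing x. Then for every w ∈ C: ‖x⁺ − w‖² ≤ ‖x − w‖² + 2λ(f(w) − f(x⁺)). -/

import Mathlib

open Filter Topology InnerProductSpace

lemma subgrad_ineq {E : Type*} [NormedAddCommGroup E] [InnerProductSpace ℝ E] [CompleteSpace E]
    {C : Set E} {e : E → ℝ} {g x w : E} (hconv : ConvexOn ℝ C e)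
    (hgrad : HasGradientAt e g x) (hxC : x ∈ C) (hwC : w ∈ C) :
    ⟪g, w - x⟫_ℝ ≤ e w - e x := by
  set φ : ℝ → ℝ := fun t => e (x + t • (w - x)) with hφ
  have hline : HasDerivAt (fun t : ℝ => x + t • (w - x)) (w - x) 0 := by
    simpa using ((hasDerivAt_id (0:ℝ)).smul_const (w - x)).const_add x
  have hφ' : HasDerivAt φ ⟪g, w - x⟫_ℝ 0 := by
    have hF : HasFDerivAt e (toDual ℝ E g) ((fun t : ℝ => x + t • (w - x)) 0) := by
      simpa using hgrad.hasFDerivAt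
    have := hF.comp_hasDerivAt 0 hline
    simp at this; exact this
  have hslope : Tendsto (slope φ 0) (𝓝[>] 0) (𝓝 ⟪g, w - x⟫_ℝ) :=
    (hasDerivAt_iff_tendsto_slope.mp hφ').mono_left
      (nhdsWithin_mono 0 (fun t ht => ne_of_gt ht))
  have hbound : ∀ᶠ t in 𝓝[>] (0:ℝ), slope φ 0 t ≤ e w - e x := by
    filter_upwards [Ioo_mem_nhdsGT_of_mem (by norm_num : (0:ℝ) ∈ Set.Ico 0 1)]
      with t ht
    have ht0 : 0 < t := ht.1
    have ht1 : t < 1 := ht.2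
    have hcomb : e ((1 - t) • x + t • w) ≤ (1 - t) * e x + t * e w :=
      hconv.2 hxC hwC (by linarith) ht0.le (by ring)
    have heq : x + t • (w - x) = (1 - t) • x + t • w := by
      simp [smul_sub, sub_smul, one_smul]; abel
    have hφt : φ t ≤ (1 - t) * e x + t * e w := by
      show e (x + t • (w - x)) ≤ _
      rw [heq]; exact hcomb
    have hφ0 : φ 0 = e x := by simp [φ]
    rw [slope_def_field, hφ0, sub_zero, div_le_iff₀ ht0]
    nlinarith
  exact le_of_tendsto hslope hbound

theorem prox_fejer_inequality
    (n : ℕ) (f : EuclideanSpace ℝ (Fin n) → ℝ) (lam : ℝ) (hlam : 0 < lam)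
    (e : EuclideanSpace ℝ (Fin n) → ℝ)
    (he : ∀ u, e u = ⨅ y, (f y + 1 / (2 * lam) * ‖y - u‖ ^ 2))
    (x xp : EuclideanSpace ℝ (Fin n))
    (hmin : IsMinOn (fun y => f y + 1 / (2 * lam) * ‖y - x‖ ^ 2) Set.univ xp)
    (hle : ∀ u, e u ≤ f u)
    (hval : e x = f xp + 1 / (2 * lam) * ‖xp - x‖ ^ 2)
    (C : Set (EuclideanSpace ℝ (Fin n))) (hC : Convex ℝ C) (hxC : x ∈ C)
    (hconv : ConvexOn ℝ C e)
    (hgrad : HasGradientAt e ((1 / lam) • (x - xp)) x) :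
    ∀ w ∈ C, ‖xp - w‖ ^ 2 ≤ ‖x - w‖ ^ 2 + 2 * lam * (f w - f xp) := by
  intro w hwC
  have hsub := subgrad_ineq hconv hgrad hxC hwC
  have hlew := hle w
  rw [real_inner_smul_left, hval] at hsub
  have hexp : ‖xp - w‖ ^ 2 = ‖xp - x‖ ^ 2 + 2 * ⟪xp - x, x - w⟫_ℝ + ‖x - w‖ ^ 2 := by
    have h := norm_add_sq_real (xp - x) (x - w)
    rw [show (xp - x) + (x - w) = xp - w by abel] at h
    linarith
  have hinner : ⟪x - xp, w - x⟫_ℝ = ⟪xp - x, x - w⟫_ℝ := by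
    rw [show x - xp = -(xp - x) by abel, show w - x = -(x - w) by abel, inner_neg_neg]
  rw [hinner] at hsub
  have h3 := mul_le_mul_of_nonneg_left hsub hlam.le
  rw [← mul_assoc, mul_one_div, div_self hlam.ne', one_mul] at h3
  have h4 : lam * (1 / (2 * lam) * ‖xp - x‖ ^ 2) = ‖xp - x‖ ^ 2 / 2 := by
    field_simp
  rw [hexp]
  nlinarith [h3, h4, hlew]
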